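/- Let t ∈ ℕ, let c : Fin 2^t → ZMod 2 be a nonzero vector, let i_k be the largest index with c_{i_k} ≠ 0, and define s(n) = Σ_{i=0}^{2^t−1} c_i · (C(n, i) mod 2). Then the linear complexity of s equals i_k + 1; precisely: (a) Σ_{j=0}^{i_k+1} (C(i_k + 1, j) mod 2) · s(n + j) = 0 in ZMod 2 for all n; and (b) for every choice of coefficients a_0, …, a_{i_k−1} ∈ ZMod 2 there exists n such that s(n + i_k) ≠ Σ_{j=0}^{i_k−1} a_j · s(n + j). -/
import Mathlib


open Finset Function

private lemma iterZero (l : ℕ) : (fwdDiff (1:ℕ))^[l] (fun _ ↦ (0 : ZMod 2)) = fun _ ↦ 0 := by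
  induction l with
  | zero => rfl
  | succ l ih => rw [Function.iterate_succ_apply, fwdDiff_const, ih]

private lemma iterChoose (j k : ℕ) :
    (fwdDiff (1:ℕ))^[k] (fun x ↦ (x.choose (k + j) : ZMod 2)) = fun x ↦ (x.choose j : ZMod 2) := by
  induction' k with k IH generalizing j
  · simp
  · simp only [Function.iterate_succ_apply', add_assoc, add_comm 1 j, IH]
    ext n
    simp only [fwdDiff, Nat.choose_succ_succ' n j, Nat.cast_add, sub_eq_add_neg, CharTwo.neg_eq]
    ring_nf
    simp [CharTwo.two_eq_zero]

private lemma iterDiag (m : ℕ) :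
    (fwdDiff (1:ℕ))^[m] (fun x ↦ (x.choose m : ZMod 2)) = fun _ ↦ 1 := by
  simpa using iterChoose 0 m

private lemma iterChooseZero (m k : ℕ) (h : m < k) :
    (fwdDiff (1:ℕ))^[k] (fun x ↦ (x.choose m : ZMod 2)) = fun _ ↦ 0 := by
  obtain ⟨l, rfl⟩ := Nat.exists_eq_add_of_lt h
  rw [(by ring : m + l + 1 = l + 1 + m), Function.iterate_add_apply, iterDiag,
    Function.iterate_succ_apply, fwdDiff_const, iterZero]


/-- For a sequence with nonzero B-representation coefficient vector `c` whose largest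
nonzero index is `ik`, the linear complexity equals `ik + 1`:
(a) the sequence satisfies the order-`(ik+1)` recurrence with coefficients `C(ik+1, j)`;
(b) it satisfies no linear recurrence of order `ik`. -/
theorem linear_complexity_eq_top_index (t : ℕ) (c : Fin (2 ^ t) → ZMod 2)
    (ik : Fin (2 ^ t)) (hik : c ik ≠ 0) (htop : ∀ j : Fin (2 ^ t), ik < j → c j = 0)
    (s : ℕ → ZMod 2)
    (hs : ∀ n : ℕ, s n = ∑ i : Fin (2 ^ t), c i * (n.choose (i : ℕ) : ZMod 2)) :
    (∀ n : ℕ,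
      ∑ j ∈ Finset.range ((ik : ℕ) + 2), (((ik : ℕ) + 1).choose j : ZMod 2) * s (n + j)
        = 0) ∧
    (∀ a : ℕ → ZMod 2, ∃ n : ℕ,
      s (n + (ik : ℕ)) ≠ ∑ j ∈ Finset.range (ik : ℕ), a j * s (n + j)) := by
  set K := (ik : ℕ) with hK
  have hcik : c ik = 1 := by
    have : ∀ x : ZMod 2, x ≠ 0 → x = 1 := by decide
    exact this _ hik
  have hsfun : s = ∑ i : Fin (2 ^ t), c i • (fun n ↦ ((n.choose (i : ℕ) : ZMod 2))) := by
    funext n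
    rw [hs n, Finset.sum_apply]
    simp [smul_eq_mul]
  -- F3 : Δ^[k] s = 0 for k > K
  have F3 : ∀ k : ℕ, K < k → (fwdDiff (1:ℕ))^[k] s = fun _ ↦ 0 := by
    intro k hk
    rw [hsfun, fwdDiff_iter_finset_sum]
    funext n
    rw [Finset.sum_apply]
    apply Finset.sum_eq_zero
    intro i _
    by_cases hi : ik < i
    · rw [htop i hi, zero_smul]
      exact congrFun (iterZero k) n
    · push_neg at hi
      have : (i : ℕ) < k := lt_of_le_of_lt (by exact_mod_cast hi) hk
      rw [fwdDiff_iter_const_smul, iterChooseZero _ _ this]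
      simp
  -- F2 : Δ^[K] s = 1
  have F2 : (fwdDiff (1:ℕ))^[K] s = fun _ ↦ 1 := by
    rw [hsfun, fwdDiff_iter_finset_sum]
    rw [Fintype.sum_eq_single ik ?side]
    · rw [fwdDiff_iter_const_smul, iterDiag, hcik]
      funext n; simp
    case side =>
      intro i hi
      rcases lt_or_gt_of_ne hi with h | h
      · have : (i : ℕ) < K := by exact_mod_cast h
        rw [fwdDiff_iter_const_smul, iterChooseZero _ _ this]
        funext n; simp
      · rw [htop i h, zero_smul]
        exact iterZero K
  constructor
  · -- part (a)
    intro n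
    have := fwdDiff_iter_eq_sum_shift (1:ℕ) s (K + 1) n
    rw [F3 (K+1) (by omega)] at this
    have key : ∀ k : ℕ, (((-1:ℤ) ^ (K + 1 - k) * ((K+1).choose k : ℤ)) • s (n + k • 1))
        = (((K+1).choose k : ZMod 2)) * s (n + k) := by
      intro k
      rw [zsmul_eq_mul, smul_eq_mul, mul_one]
      push_cast
      rw [CharTwo.neg_eq, one_pow, one_mul]
    simp only [key] at this
    exact this.symm
  · -- part (b)
    intro a
    by_contra hcon
    push_neg at hcon
    set e : ℕ → ZMod 2 := fun j ↦ if j = K then 1 else a j with he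
    have H0 : ∀ n, ∑ j ∈ Finset.range (K + 1), e j * s (n + j) = 0 := by
      intro n
      rw [Finset.sum_range_succ]
      have h1 : ∑ j ∈ Finset.range K, e j * s (n + j)
          = ∑ j ∈ Finset.range K, a j * s (n + j) := by
        apply Finset.sum_congr rfl
        intro j hj
        simp only [Finset.mem_range] at hj
        have hej : e j = a j := by rw [he]; simp [Nat.ne_of_lt hj]
        rw [hej]
      rw [h1, ← hcon n, he]
      simp [CharTwo.add_self_eq_zero]
    -- change of basis to fwdDiff powers
    set β : ℕ → ZMod 2 := fun m ↦ ∑ j ∈ Finset.range (K + 1), e j * ((j.choose m : ZMod 2)) with hβ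
    have H1 : ∀ n, ∑ m ∈ Finset.range (K + 1), β m * (fwdDiff (1:ℕ))^[m] s n = 0 := by
      intro n
      have shift : ∀ j ∈ Finset.range (K + 1),
          e j * s (n + j) = ∑ m ∈ Finset.range (K + 1),
            e j * ((j.choose m : ZMod 2) * (fwdDiff (1:ℕ))^[m] s n) := by
        intro j hj
        simp only [Finset.mem_range] at hj
        have h2 := shift_eq_sum_fwdDiff_iter (1:ℕ) s j n
        rw [smul_eq_mul, mul_one] at h2
        have h3 : ∑ k ∈ Finset.range (j + 1), j.choose k • (fwdDiff (1:ℕ))^[k] s n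
            = ∑ k ∈ Finset.range (K + 1), j.choose k • (fwdDiff (1:ℕ))^[k] s n := by
          apply Finset.sum_subset
          · intro x hx; simp only [Finset.mem_range] at *; omega
          · intro x _ hx
            simp only [Finset.mem_range, not_lt] at hx
            rw [Nat.choose_eq_zero_of_lt (by omega), zero_smul]
        rw [h2, h3, Finset.mul_sum]
        apply Finset.sum_congr rfl
        intro m _
        rw [nsmul_eq_mul]
      calc ∑ m ∈ Finset.range (K + 1), β m * (fwdDiff (1:ℕ))^[m] s n
          = ∑ m ∈ Finset.range (K + 1), ∑ j ∈ Finset.range (K + 1),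
              e j * ((j.choose m : ZMod 2) * (fwdDiff (1:ℕ))^[m] s n) := by
            apply Finset.sum_congr rfl
            intro m _
            rw [hβ]
            rw [Finset.sum_mul]
            apply Finset.sum_congr rfl
            intro j _
            ring
        _ = ∑ j ∈ Finset.range (K + 1), ∑ m ∈ Finset.range (K + 1),
              e j * ((j.choose m : ZMod 2) * (fwdDiff (1:ℕ))^[m] s n) := Finset.sum_comm
        _ = ∑ j ∈ Finset.range (K + 1), e j * s (n + j) := by
            apply Finset.sum_congr rfl
            intro j hj
            rw [← shift j hj]
        _ = 0 := H0 n
    -- all β m vanish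
    have zero : ∀ m, m ≤ K → β m = 0 := by
      intro m
      induction m using Nat.strong_induction_on with
      | _ m IH =>
        intro hm
        have gdef : (∑ l ∈ Finset.range (K + 1), β l • (fwdDiff (1:ℕ))^[l] s)
            = (fun _ ↦ (0 : ZMod 2)) := by
          funext n
          rw [Finset.sum_apply]
          simpa [smul_eq_mul] using H1 n
        have h2 : (fwdDiff (1:ℕ))^[K - m] (∑ l ∈ Finset.range (K + 1), β l • (fwdDiff (1:ℕ))^[l] s)
            = fun _ ↦ (0 : ZMod 2) := by rw [gdef, iterZero]
        rw [fwdDiff_iter_finset_sum] at h2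
        simp only [fwdDiff_iter_const_smul] at h2
        have h3 := congrFun h2 0
        rw [Finset.sum_apply] at h3
        rw [Finset.sum_eq_single m] at h3
        · rw [← Function.iterate_add_apply, (by omega : K - m + m = K), F2] at h3
          simpa using h3
        · intro l hl hlm
          simp only [Finset.mem_range] at hl
          rcases lt_or_gt_of_ne hlm with h | h
          · rw [IH l h (by omega)]
            simp
          · rw [← Function.iterate_add_apply, F3 (K - m + l) (by omega)]
            simp
        · intro hmem
          simp only [Finset.mem_range] at hmem
          omega
    -- but β K = 1
    have βK : β K = 1 := by
      show ∑ j ∈ Finset.range (K + 1), e j * ((j.choose K : ZMod 2)) = 1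
      rw [Finset.sum_range_succ]
      have h1 : ∑ j ∈ Finset.range K, e j * ((j.choose K : ZMod 2)) = 0 := by
        apply Finset.sum_eq_zero
        intro j hj
        simp only [Finset.mem_range] at hj
        rw [Nat.choose_eq_zero_of_lt hj]
        simp
      rw [h1]
      simp [he]
    have := zero K le_rfl
    rw [βK] at this
    exact one_ne_zero this
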